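/- There exists a closed topological embedding of 𝒦(ℚ) into 𝒦(𝔈); that is, a map e : 𝒦(ℚ) → 𝒦(𝔈) that is a homeomorphism onto a closed subspace of 𝒦(𝔈). -/

import Mathlib

open Set Topology Filter

/-- Erdős space: the set of square-summable sequences of rationals, as a subspace of the
real Hilbert space `ℓ²`. -/
noncomputable abbrev ErdosSpace : Type :=
  {x : lp (fun _ : ℕ => ℝ) 2 // ∀ n : ℕ, ∃ q : ℚ, x n = (q : ℝ)}

namespace ErdosAux

noncomputable def sing (r : ℝ) : lp (fun _ : ℕ => ℝ) 2 := lp.single 2 0 r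

lemma sing_apply_zero (r : ℝ) : sing r 0 = r :=
  lp.single_apply_self (E := fun _ : ℕ => ℝ) 2 0 r

lemma sing_apply_ne (r : ℝ) {n : ℕ} (hn : n ≠ 0) : sing r n = 0 :=
  lp.single_apply_ne (E := fun _ : ℕ => ℝ) 2 0 r hn

lemma sing_sub (a b : ℝ) : sing a - sing b = sing (a - b) := by
  apply lp.ext
  funext j
  by_cases hj : j = 0
  · subst hj; simp [sing_apply_zero]
  · simp [sing_apply_ne _ hj]

lemma norm_sing (r : ℝ) : ‖sing r‖ = ‖r‖ := by
  have := lp.norm_single (E := fun _ : ℕ => ℝ) (p := 2) (by norm_num)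
    0 r
  simpa [sing] using this

noncomputable def jrat : ℚ → ErdosSpace := fun q =>
  ⟨sing (q : ℝ), fun n => by
    by_cases hn : n = 0
    · subst hn; exact ⟨q, sing_apply_zero _⟩
    · exact ⟨0, by rw [sing_apply_ne _ hn]; simp⟩⟩

lemma isometry_jrat : Isometry jrat := by
  refine Isometry.of_dist_eq fun q q' => ?_
  have : dist (jrat q) (jrat q') = ‖sing (q : ℝ) - sing (q' : ℝ)‖ := by
    rw [Subtype.dist_eq, dist_eq_norm]; rfl
  rw [this, sing_sub, norm_sing]
  rw [← Rat.cast_sub, Rat.norm_cast_real, dist_eq_norm]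

lemma fact_one_le_two : Fact ((1 : ENNReal) ≤ 2) := ⟨by norm_num⟩

lemma continuous_eval (n : ℕ) : Continuous fun x : ErdosSpace => (x.1 : ∀ _ : ℕ, ℝ) n := by
  have : Fact ((1 : ENNReal) ≤ 2) := fact_one_le_two
  have h1 : Continuous fun f : lp (fun _ : ℕ => ℝ) 2 => (f : ∀ _ : ℕ, ℝ) :=
    (lp.uniformContinuous_coe (E := fun _ : ℕ => ℝ)).continuous
  exact ((continuous_apply n).comp h1).comp continuous_subtype_val

lemma range_jrat : range jrat = {x : ErdosSpace | ∀ n : ℕ, n ≠ 0 → (x.1 : ∀ _ : ℕ, ℝ) n = 0} := by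
  ext x
  constructor
  · rintro ⟨q, rfl⟩ n hn
    exact sing_apply_ne _ hn
  · intro hx
    obtain ⟨q, hq⟩ := x.2 0
    refine ⟨q, ?_⟩
    apply Subtype.ext
    apply lp.ext
    funext j
    by_cases hj : j = 0
    · subst hj
      show sing (q : ℝ) 0 = _
      rw [sing_apply_zero, hq]
    · show sing (q : ℝ) j = _
      rw [sing_apply_ne _ hj, hx j hj]

lemma isClosed_range_jrat : IsClosed (range jrat) := by
  rw [range_jrat]
  have : {x : ErdosSpace | ∀ n : ℕ, n ≠ 0 → (x.1 : ∀ _ : ℕ, ℝ) n = 0} =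
      ⋂ n : {n : ℕ // n ≠ 0}, (fun x : ErdosSpace => (x.1 : ∀ _ : ℕ, ℝ) n.1) ⁻¹' {0} := by
    ext x; simp [Subtype.forall]
  rw [this]
  exact isClosed_iInter fun n => IsClosed.preimage (continuous_eval n.1) isClosed_singleton

lemma isClosedEmbedding_jrat : Topology.IsClosedEmbedding jrat :=
  ⟨isometry_jrat.isEmbedding, isClosed_range_jrat⟩

/-- For a closed set `C`, the collection of nonempty compact sets contained in `C` is closed
in the hyperspace. -/
lemma isClosed_subsets {X : Type*} [MetricSpace X] {C : Set X} (hC : IsClosed C) :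
    IsClosed {K : TopologicalSpace.NonemptyCompacts X | (K : Set X) ⊆ C} := by
  rw [← isOpen_compl_iff, EMetric.isOpen_iff]
  rintro K hK
  simp only [mem_compl_iff, mem_setOf_eq, not_forall] at hK
  obtain ⟨x, hxK, hxC⟩ : ∃ x ∈ (K : Set X), x ∉ C := not_subset.1 hK
  have hpos : 0 < EMetric.infEdist x C := by
    rw [pos_iff_ne_zero]
    intro h0
    exact hxC (hC.closure_eq ▸ EMetric.mem_closure_iff_infEdist_zero.2 h0)
  refine ⟨EMetric.infEdist x C, hpos, fun K' hK' => ?_⟩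
  simp only [mem_compl_iff, mem_setOf_eq]
  intro hsub
  have hH : EMetric.hausdorffEdist (K : Set X) (K' : Set X) < EMetric.infEdist x C := by
    rw [EMetric.hausdorffEdist, Metric.hausdorffEDist_comm]; exact hK'
  obtain ⟨y, hyK', hxy⟩ := EMetric.exists_edist_lt_of_hausdorffEdist_lt hxK hH
  have hyC : y ∈ C := hsub hyK'
  have : EMetric.infEdist x C ≤ edist x y := by
    calc EMetric.infEdist x C ≤ EMetric.infEdist y C + edist x y :=
          EMetric.infEdist_le_infEdist_add_edist
      _ = edist x y := by rw [EMetric.infEdist, EMetric.infEdist_zero_of_mem hyC, zero_add]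
  exact absurd (this.trans_lt hxy) (lt_irrefl _)

noncomputable def gmap (K : TopologicalSpace.NonemptyCompacts ℚ) :
    TopologicalSpace.NonemptyCompacts ErdosSpace :=
  ⟨⟨jrat '' K, K.isCompact.image isometry_jrat.continuous⟩, K.nonempty.image _⟩

lemma isometry_gmap : Isometry gmap := by
  intro K K'
  show EMetric.hausdorffEdist (jrat '' (K : Set ℚ)) (jrat '' (K' : Set ℚ)) =
    EMetric.hausdorffEdist (K : Set ℚ) (K' : Set ℚ)
  exact EMetric.hausdorffEdist_image isometry_jrat

lemma range_gmap : range gmap =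
    {K : TopologicalSpace.NonemptyCompacts ErdosSpace | (K : Set ErdosSpace) ⊆ range jrat} := by
  ext K
  constructor
  · rintro ⟨L, rfl⟩
    exact image_subset_range _ _
  · intro hK
    have hLc : IsCompact (jrat ⁻¹' (K : Set ErdosSpace)) :=
      isClosedEmbedding_jrat.isCompact_preimage K.isCompact
    have himg : jrat '' (jrat ⁻¹' (K : Set ErdosSpace)) = (K : Set ErdosSpace) := by
      rw [image_preimage_eq_iff]
      exact hK
    have hne : (jrat ⁻¹' (K : Set ErdosSpace)).Nonempty := by
      obtain ⟨x, hx⟩ := K.nonempty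
      obtain ⟨q, rfl⟩ := hK hx
      exact ⟨q, hx⟩
    refine ⟨⟨⟨jrat ⁻¹' (K : Set ErdosSpace), hLc⟩, hne⟩, ?_⟩
    apply TopologicalSpace.NonemptyCompacts.ext
    exact himg

end ErdosAux

/-- There is a closed topological embedding of the hyperspace `𝒦(ℚ)` of nonempty compact
subsets of `ℚ` into the hyperspace `𝒦(𝔈)` of nonempty compact subsets of Erdős space
(both with the Vietoris, equivalently Hausdorff metric, topology). -/
theorem exists_closedEmbedding_compacts_rat_compacts_erdos :
    ∃ e : TopologicalSpace.NonemptyCompacts ℚ → TopologicalSpace.NonemptyCompacts ErdosSpace,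
      Topology.IsClosedEmbedding e := by
  refine ⟨ErdosAux.gmap, ErdosAux.isometry_gmap.isEmbedding, ?_⟩
  rw [ErdosAux.range_gmap]
  exact ErdosAux.isClosed_subsets ErdosAux.isClosed_range_jrat
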